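/- Pre-image of the order-matching clearing operator in the centred framework: for every X ∈ L⁰, {Y ∈ E^m : C'(Y) = X} = Γ^m(X). -/

import Mathlib

open scoped BigOperators

namespace COB

/-- Vectors of queue sizes indexed by prices in `I = {−d',…,d'}` (functions `ℤ → ℕ`
vanishing outside `I`; the support condition is part of membership in `Em`). -/
abbrev VecC := ℤ → ℕ

/-- Pairs (buy side, sell side). -/
abbrev EC := VecC × VecC

/-- A vector is supported in `{−d',…,d'}`. -/
def suppIn (d' : ℕ) (Z : VecC) : Prop :=
  ∀ j : ℤ, Z j ≠ 0 → -(d' : ℤ) ≤ j ∧ j ≤ (d' : ℤ)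

/-- Price support of a vector, inside `I = {−d',…,d'}`. -/
noncomputable def suppC (d' : ℕ) (Z : VecC) : Finset ℤ :=
  (Finset.Icc (-(d' : ℤ)) (d' : ℤ)).filter fun j => 0 < Z j

/-- `sup` of a finite set of prices, with the convention `sup ∅ = −d'`. -/
def supD (d' : ℕ) (S : Finset ℤ) : ℤ := if h : S.Nonempty then S.max' h else -(d' : ℤ)

/-- `inf` of a finite set of prices, with the convention `inf ∅ = d'`. -/
def infD (d' : ℕ) (S : Finset ℤ) : ℤ := if h : S.Nonempty then S.min' h else (d' : ℤ)

/-- bid price `b(X) = sup supp(X⁺)` (convention `sup supp(0) = −d'`). -/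
noncomputable def bC (d' : ℕ) (X : EC) : ℤ := supD d' (suppC d' X.1)

/-- ask price `a(X) = inf supp(X⁻)` (convention `inf supp(0) = d'`). -/
noncomputable def aC (d' : ℕ) (X : EC) : ℤ := infD d' (suppC d' X.2)

/-- `E^m`: configurations supported in `I` with nonempty buy and sell sides. -/
def Em (d' : ℕ) : Set EC :=
  {X | suppIn d' X.1 ∧ suppIn d' X.2 ∧ X.1 ≠ 0 ∧ X.2 ≠ 0}

/-- `L⁰`: elements of `E^m` with `a(X) > b(X)`. -/
def L0 (d' : ℕ) : Set EC := {X | X ∈ Em d' ∧ bC d' X < aC d' X}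

/-- `p̂`: the parity of `p` (`0` if `p` is even, `1` if `p` is odd). -/
def hatp (p : ℤ) : ℤ := p % 2

/-- `⌈p/2⌉` for an integer `p`. -/
def ceilHalf (p : ℤ) : ℤ := Int.fdiv (p + 1) 2

/-- `[p,p'] = ⌈p'/2⌉ − ⌈p/2⌉`. -/
def shift (p p' : ℤ) : ℤ := ceilHalf p' - ceilHalf p

/-- The centred state space `L^m`. -/
def Lm (d' : ℕ) : Set (EC × ℤ) :=
  {Xp | Xp.1 ∈ Em d' ∧ bC d' Xp.1 < aC d' Xp.1 ∧
    aC d' Xp.1 + bC d' Xp.1 + hatp Xp.2 = 0}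

/-- The truncating shift `σ_i` on a single vector. -/
def sigmaV (d' : ℕ) (i : ℤ) (Y : VecC) : VecC := fun j =>
  if min (d' : ℤ) ((d' : ℤ) - i) < j ∨ j < max (-(d' : ℤ)) (-(d' : ℤ) - i) then 0
  else Y (j + i)

/-- The truncating shift `σ_i` acting componentwise on pairs. -/
def sigmaP (d' : ℕ) (i : ℤ) (Y : EC) : EC := (sigmaV d' i Y.1, sigmaV d' i Y.2)

/-- The centering operator `J(Y,p) = (σ_{[p,p']}(Y), p')`, `p' = p + a(Y) + b(Y) + p̂`. -/
noncomputable def J (d' : ℕ) (Y : EC) (p : ℤ) : EC × ℤ :=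
  (sigmaP d' (shift p (p + aC d' Y + bC d' Y + hatp p)) Y,
    p + aC d' Y + bC d' Y + hatp p)


/-- `B_X(k) = Σ_{i ≥ k} X⁺_i` (sum over `I`). -/
noncomputable def BXC (d' : ℕ) (X : EC) (k : ℤ) : ℕ :=
  ∑ j ∈ Finset.Icc (-(d' : ℤ)) (d' : ℤ), if k ≤ j then X.1 j else 0

/-- `S_X(k) = Σ_{i ≤ k} X⁻_i` (sum over `I`). -/
noncomputable def SXC (d' : ℕ) (X : EC) (k : ℤ) : ℕ :=
  ∑ j ∈ Finset.Icc (-(d' : ℤ)) (d' : ℤ), if j ≤ k then X.2 j else 0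

/-- `g_X(k) = S_X(k) − B_X(k)`. -/
noncomputable def gXC (d' : ℕ) (X : EC) (k : ℤ) : ℤ := (SXC d' X k : ℤ) - (BXC d' X k : ℤ)

/-- `p_A(X) = inf{k ∈ I : g_X(k) > 0}`, convention `inf ∅ = d'+1`. -/
noncomputable def pAC (d' : ℕ) (X : EC) : ℤ :=
  if h : ((Finset.Icc (-(d' : ℤ)) (d' : ℤ)).filter fun k => 0 < gXC d' X k).Nonempty
  then ((Finset.Icc (-(d' : ℤ)) (d' : ℤ)).filter fun k => 0 < gXC d' X k).min' h
  else (d' : ℤ) + 1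

/-- `p_B(X) = sup{k ∈ I : g_X(k) < 0}`, convention `sup ∅ = −d'−1`. -/
noncomputable def pBC (d' : ℕ) (X : EC) : ℤ :=
  if h : ((Finset.Icc (-(d' : ℤ)) (d' : ℤ)).filter fun k => gXC d' X k < 0).Nonempty
  then ((Finset.Icc (-(d' : ℤ)) (d' : ℤ)).filter fun k => gXC d' X k < 0).max' h
  else -(d' : ℤ) - 1

/-- `τ_i`: zero out entries at prices `> i`. -/
def tauLowC (d' : ℕ) (i : ℤ) (z : VecC) : VecC := fun j =>
  if j ≤ i ∧ -(d' : ℤ) ≤ j ∧ j ≤ (d' : ℤ) then z j else 0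

/-- `τ^i`: zero out entries at prices `< i`. -/
def tauHighC (d' : ℕ) (i : ℤ) (z : VecC) : VecC := fun j =>
  if i ≤ j ∧ -(d' : ℤ) ≤ j ∧ j ≤ (d' : ℤ) then z j else 0

/-- Standard basis vector at price `i ∈ I`. -/
def eC (d' : ℕ) (i : ℤ) : VecC := fun j =>
  if j = i ∧ -(d' : ℤ) ≤ i ∧ i ≤ (d' : ℤ) then 1 else 0

/-- Buy side after order-matching clearing (same formulas as in the fixed-price
framework). -/
noncomputable def clearPlusC (d' : ℕ) (X : EC) : VecC :=
  if gXC d' X (pBC d' X) ≤ -(X.1 (pBC d' X) : ℤ) then tauLowC d' (pBC d' X) X.1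
  else fun j => tauLowC d' (pBC d' X - 1) X.1 j +
    (max 0 (-(gXC d' X (pBC d' X)))).toNat * eC d' (pBC d' X) j

/-- Sell side after order-matching clearing. -/
noncomputable def clearMinusC (d' : ℕ) (X : EC) : VecC :=
  if (X.2 (pAC d' X) : ℤ) ≤ gXC d' X (pAC d' X) then tauHighC d' (pAC d' X) X.2
  else fun j => tauHighC d' (pAC d' X + 1) X.2 j +
    (max 0 (gXC d' X (pAC d' X))).toNat * eC d' (pAC d' X) j

/-- The order-matching clearing operator `C'` of the centred framework. -/
noncomputable def clearC (d' : ℕ) (X : EC) : EC := (clearPlusC d' X, clearMinusC d' X)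

/-- The centred clearing operator `C^m(X,p) = J(C'(X), p)`. -/
noncomputable def Cm (d' : ℕ) (X : EC) (p : ℤ) : EC × ℤ := J d' (clearC d' X) p

/-- The set `Γ^m(X)`: pre-image candidates of `X` under the order-matching clearing
operator `C'`. -/
def GammaM (d' : ℕ) (X : EC) : Set EC :=
  {Y | Y ∈ Em d' ∧
    (∀ j : ℤ, X.1 j ≤ Y.1 j ∧ X.2 j ≤ Y.2 j) ∧
    (∑ j ∈ Finset.Icc (-(d' : ℤ)) (d' : ℤ), ((Y.1 j : ℤ) - (X.1 j : ℤ))) =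
      (∑ j ∈ Finset.Icc (-(d' : ℤ)) (d' : ℤ), ((Y.2 j : ℤ) - (X.2 j : ℤ))) ∧
    supD d' ((Finset.Icc (-(d' : ℤ)) (d' : ℤ)).filter fun j => X.2 j < Y.2 j) ≤
      infD d' ((Finset.Icc (-(d' : ℤ)) (d' : ℤ)).filter fun j => X.1 j < Y.1 j) ∧
    supD d' ((Finset.Icc (-(d' : ℤ)) (d' : ℤ)).filter fun j => X.2 j < Y.2 j) ≤ aC d' X ∧
    bC d' X ≤ infD d' ((Finset.Icc (-(d' : ℤ)) (d' : ℤ)).filter fun j => X.1 j < Y.1 j)}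

/-- The set `Λ(X,p)`: pre-image of `(X,p)` under the centering operator `J`. -/
def LambdaSet (d' : ℕ) (X : EC) (p : ℤ) : Set (EC × ℤ) :=
  {Yp | Yp.1 ∈ Em d' ∧
    supD d' (suppC d' X.2) - (d' : ℤ) ≤ shift p Yp.2 ∧
    shift p Yp.2 ≤ (d' : ℤ) + infD d' (suppC d' X.1) ∧
    ∃ af bf : ℤ → ℕ,
      Yp.1.1 = (fun j => sigmaV d' (shift p Yp.2) X.1 j +
        if -(d' : ℤ) ≤ j ∧ j ≤ -(d' : ℤ) - shift p Yp.2 - 1 then bf j else 0) ∧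
      Yp.1.2 = (fun j => sigmaV d' (shift p Yp.2) X.2 j +
        if (d' : ℤ) - shift p Yp.2 + 1 ≤ j ∧ j ≤ (d' : ℤ) then af j else 0)}


section Proofs
open Finset

/-! ### Generic sum helpers -/

lemma sum_ite_nonneg'' {s : Finset ℤ} {f : ℤ → ℤ} (p : ℤ → Prop) [DecidablePred p]
    (hf : ∀ j ∈ s, 0 ≤ f j) : 0 ≤ ∑ j ∈ s, if p j then f j else 0 :=
  Finset.sum_nonneg fun i hi => by split <;> simp [hf i hi]

lemma sum_ite_le'' {s : Finset ℤ} {f : ℤ → ℤ} (p : ℤ → Prop) [DecidablePred p]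
    (hf : ∀ j ∈ s, 0 ≤ f j) : (∑ j ∈ s, if p j then f j else 0) ≤ ∑ j ∈ s, f j :=
  Finset.sum_le_sum fun i hi => by split <;> simp [hf i hi]

lemma sum_ite_mono'' {s : Finset ℤ} {f : ℤ → ℤ} (p q : ℤ → Prop) [DecidablePred p]
    [DecidablePred q] (hf : ∀ j ∈ s, 0 ≤ f j) (hpq : ∀ j, p j → q j) :
    (∑ j ∈ s, if p j then f j else 0) ≤ ∑ j ∈ s, if q j then f j else 0 :=
  Finset.sum_le_sum fun i hi => by
    by_cases h : p i
    · simp [h, hpq i h]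
    · simp only [h, if_false]
      split <;> simp [hf i hi]

lemma sum_ite_eq_total'' {s : Finset ℤ} {f : ℤ → ℤ} (p : ℤ → Prop) [DecidablePred p]
    (h : ∀ j ∈ s, ¬ p j → f j = 0) :
    (∑ j ∈ s, if p j then f j else 0) = ∑ j ∈ s, f j :=
  Finset.sum_congr rfl fun i hi => by
    by_cases hp : p i <;> simp [hp, h i hi]

lemma sum_split'' {s : Finset ℤ} (f : ℤ → ℤ) (k : ℤ) :
    ∑ j ∈ s, f j =
      (∑ j ∈ s, if j ≤ k then f j else 0) + ∑ j ∈ s, if k + 1 ≤ j then f j else 0 := by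
  rw [← Finset.sum_add_distrib]
  refine Finset.sum_congr rfl fun i _ => ?_
  by_cases h : i ≤ k
  · rw [if_pos h, if_neg (show ¬ (k + 1 ≤ i) by omega), add_zero]
  · rw [if_neg h, if_pos (show k + 1 ≤ i by omega), zero_add]

lemma single_le_sum_ite'' {s : Finset ℤ} {f : ℤ → ℤ} (p : ℤ → Prop) [DecidablePred p]
    (hf : ∀ j ∈ s, 0 ≤ f j) {j₀ : ℤ} (hj₀ : j₀ ∈ s) (hp : p j₀) :
    f j₀ ≤ ∑ j ∈ s, if p j then f j else 0 := by
  have := Finset.single_le_sum (f := fun j => if p j then f j else 0)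
    (fun i hi => by split <;> simp [hf i hi]) hj₀
  simpa [hp] using this

lemma sum_ite_le_succ'' {s : Finset ℤ} (f : ℤ → ℤ) (k : ℤ) :
    (∑ j ∈ s, if j ≤ k + 1 then f j else 0) =
      (∑ j ∈ s, if j ≤ k then f j else 0) + (if k + 1 ∈ s then f (k + 1) else 0) := by
  rw [← Finset.sum_ite_eq' s (k + 1) f, ← Finset.sum_add_distrib]
  refine Finset.sum_congr rfl fun i _ => ?_
  by_cases h1 : i ≤ k
  · rw [if_pos (show i ≤ k + 1 by omega), if_pos h1,
      if_neg (show ¬ (i = k + 1) by omega), add_zero]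
  · by_cases h2 : i = k + 1
    · rw [if_pos (show i ≤ k + 1 by omega), if_neg h1, if_pos h2, zero_add]
    · rw [if_neg (show ¬ (i ≤ k + 1) by omega), if_neg h1, if_neg h2, add_zero]

lemma sum_ite_ge_pred'' {s : Finset ℤ} (f : ℤ → ℤ) (k : ℤ) :
    (∑ j ∈ s, if k ≤ j then f j else 0) =
      (∑ j ∈ s, if k + 1 ≤ j then f j else 0) + (if k ∈ s then f k else 0) := by
  rw [← Finset.sum_ite_eq' s k f, ← Finset.sum_add_distrib]
  refine Finset.sum_congr rfl fun i _ => ?_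
  by_cases h1 : k + 1 ≤ i
  · rw [if_pos (show k ≤ i by omega), if_pos h1,
      if_neg (show ¬ (i = k) by omega), add_zero]
  · by_cases h2 : i = k
    · rw [if_pos (show k ≤ i by omega), if_neg h1, if_pos h2, zero_add]
    · rw [if_neg (show ¬ (k ≤ i) by omega), if_neg h1, if_neg h2, add_zero]

/-! ### Cast forms of the book-keeping sums -/

lemma SXC_cast (d' : ℕ) (X : EC) (k : ℤ) :
    (SXC d' X k : ℤ) =
      ∑ j ∈ Finset.Icc (-(d' : ℤ)) (d' : ℤ), if j ≤ k then (X.2 j : ℤ) else 0 := by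
  rw [SXC, Nat.cast_sum]
  exact Finset.sum_congr rfl fun i _ => by split <;> simp

lemma BXC_cast (d' : ℕ) (X : EC) (k : ℤ) :
    (BXC d' X k : ℤ) =
      ∑ j ∈ Finset.Icc (-(d' : ℤ)) (d' : ℤ), if k ≤ j then (X.1 j : ℤ) else 0 := by
  rw [BXC, Nat.cast_sum]
  exact Finset.sum_congr rfl fun i _ => by split <;> simp


/-! ### Characterizations of pB, pA -/

lemma pB_eq (d' : ℕ) (X : EC) (k0 : ℤ) (hk0 : k0 ∈ Finset.Icc (-(d' : ℤ)) (d' : ℤ))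
    (hneg : gXC d' X k0 < 0)
    (habove : ∀ k ∈ Finset.Icc (-(d' : ℤ)) (d' : ℤ), k0 < k → 0 ≤ gXC d' X k) :
    pBC d' X = k0 := by
  have hmem : k0 ∈ (Finset.Icc (-(d' : ℤ)) (d' : ℤ)).filter fun k => gXC d' X k < 0 :=
    Finset.mem_filter.mpr ⟨hk0, hneg⟩
  have hne : ((Finset.Icc (-(d' : ℤ)) (d' : ℤ)).filter fun k => gXC d' X k < 0).Nonempty :=
    ⟨k0, hmem⟩
  rw [pBC, dif_pos hne]
  refine le_antisymm ?_ (Finset.le_max' _ _ hmem)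
  have hmax := Finset.max'_mem _ hne
  rw [Finset.mem_filter] at hmax
  by_contra h
  exact absurd (habove _ hmax.1 (by omega)) (by omega)

lemma pA_eq (d' : ℕ) (X : EC) (k0 : ℤ) (hk0 : k0 ∈ Finset.Icc (-(d' : ℤ)) (d' : ℤ))
    (hpos : 0 < gXC d' X k0)
    (hbelow : ∀ k ∈ Finset.Icc (-(d' : ℤ)) (d' : ℤ), k < k0 → gXC d' X k ≤ 0) :
    pAC d' X = k0 := by
  have hmem : k0 ∈ (Finset.Icc (-(d' : ℤ)) (d' : ℤ)).filter fun k => 0 < gXC d' X k :=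
    Finset.mem_filter.mpr ⟨hk0, hpos⟩
  have hne : ((Finset.Icc (-(d' : ℤ)) (d' : ℤ)).filter fun k => 0 < gXC d' X k).Nonempty :=
    ⟨k0, hmem⟩
  rw [pAC, dif_pos hne]
  refine le_antisymm (Finset.min'_le _ _ hmem) ?_
  have hmin := Finset.min'_mem _ hne
  rw [Finset.mem_filter] at hmin
  by_contra h
  exact absurd (hbelow _ hmin.1 (by omega)) (by omega)

/-! ### Support bounds -/

lemma bC_spec (d' : ℕ) (X : EC) (h1 : suppIn d' X.1) (h2 : X.1 ≠ 0) :
    (-(d' : ℤ) ≤ bC d' X ∧ bC d' X ≤ (d' : ℤ)) ∧ 0 < X.1 (bC d' X) ∧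
      ∀ j, bC d' X < j → X.1 j = 0 := by
  obtain ⟨j0, hj0⟩ : ∃ j, X.1 j ≠ 0 := Function.ne_iff.mp h2
  have hj0I := h1 j0 hj0
  have hmem : j0 ∈ suppC d' X.1 :=
    Finset.mem_filter.mpr ⟨Finset.mem_Icc.mpr hj0I, Nat.pos_of_ne_zero hj0⟩
  have hne : (suppC d' X.1).Nonempty := ⟨j0, hmem⟩
  have hb : bC d' X = (suppC d' X.1).max' hne := by rw [bC, supD, dif_pos hne]
  have hmax := Finset.max'_mem _ hne
  simp only [suppC, Finset.mem_filter, Finset.mem_Icc] at hmax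
  rw [hb]
  refine ⟨⟨hmax.1.1, hmax.1.2⟩, hmax.2, fun j hj => ?_⟩
  by_contra hXj
  have hjI := h1 j hXj
  have : j ∈ suppC d' X.1 :=
    Finset.mem_filter.mpr ⟨Finset.mem_Icc.mpr hjI, Nat.pos_of_ne_zero hXj⟩
  exact absurd (Finset.le_max' _ _ this) (by omega)

lemma aC_spec (d' : ℕ) (X : EC) (h1 : suppIn d' X.2) (h2 : X.2 ≠ 0) :
    (-(d' : ℤ) ≤ aC d' X ∧ aC d' X ≤ (d' : ℤ)) ∧ 0 < X.2 (aC d' X) ∧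
      ∀ j, j < aC d' X → X.2 j = 0 := by
  obtain ⟨j0, hj0⟩ : ∃ j, X.2 j ≠ 0 := Function.ne_iff.mp h2
  have hj0I := h1 j0 hj0
  have hmem : j0 ∈ suppC d' X.2 :=
    Finset.mem_filter.mpr ⟨Finset.mem_Icc.mpr hj0I, Nat.pos_of_ne_zero hj0⟩
  have hne : (suppC d' X.2).Nonempty := ⟨j0, hmem⟩
  have ha : aC d' X = (suppC d' X.2).min' hne := by rw [aC, infD, dif_pos hne]
  have hmin := Finset.min'_mem _ hne
  simp only [suppC, Finset.mem_filter, Finset.mem_Icc] at hmin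
  rw [ha]
  refine ⟨⟨hmin.1.1, hmin.1.2⟩, hmin.2, fun j hj => ?_⟩
  by_contra hXj
  have hjI := h1 j hXj
  have : j ∈ suppC d' X.2 :=
    Finset.mem_filter.mpr ⟨Finset.mem_Icc.mpr hjI, Nat.pos_of_ne_zero hXj⟩
  exact absurd (Finset.min'_le _ _ this) (by omega)

lemma supD_le_of (d' : ℕ) (S : Finset ℤ) (c : ℤ) (hS : ∀ j ∈ S, j ≤ c)
    (hc : -(d' : ℤ) ≤ c) : supD d' S ≤ c := by
  rw [supD]; split
  · exact Finset.max'_le _ _ _ hS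
  · exact hc

lemma le_infD_of (d' : ℕ) (S : Finset ℤ) (c : ℤ) (hS : ∀ j ∈ S, c ≤ j)
    (hc : c ≤ (d' : ℤ)) : c ≤ infD d' S := by
  rw [infD]; split
  · exact Finset.le_min' _ _ _ hS
  · exact hc

/-! ### Values of S, B, g -/

lemma SXC_eq_zero (d' : ℕ) (X : EC) (k : ℤ) (h : ∀ j, j ≤ k → X.2 j = 0) :
    SXC d' X k = 0 :=
  Finset.sum_eq_zero fun i _ => by split <;> simp_all

lemma BXC_eq_zero (d' : ℕ) (X : EC) (k : ℤ) (h : ∀ j, k ≤ j → X.1 j = 0) :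
    BXC d' X k = 0 :=
  Finset.sum_eq_zero fun i _ => by split <;> simp_all

lemma BXC_eq_single (d' : ℕ) (X : EC) (k : ℤ) (hk : k ∈ Finset.Icc (-(d' : ℤ)) (d' : ℤ))
    (h : ∀ j, k < j → X.1 j = 0) : BXC d' X k = X.1 k := by
  rw [BXC, show X.1 k = if k ∈ Finset.Icc (-(d' : ℤ)) (d' : ℤ) then X.1 k else 0 from by
    simp [hk], ← Finset.sum_ite_eq' (Finset.Icc (-(d' : ℤ)) (d' : ℤ)) k X.1]
  refine Finset.sum_congr rfl fun i _ => ?_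
  by_cases h1 : i = k
  · simp [h1]
  · by_cases h2 : k ≤ i
    · simp [h1, h2, h i (by omega)]
    · simp [h1, h2]

lemma SXC_eq_single (d' : ℕ) (X : EC) (k : ℤ) (hk : k ∈ Finset.Icc (-(d' : ℤ)) (d' : ℤ))
    (h : ∀ j, j < k → X.2 j = 0) : SXC d' X k = X.2 k := by
  rw [SXC, show X.2 k = if k ∈ Finset.Icc (-(d' : ℤ)) (d' : ℤ) then X.2 k else 0 from by
    simp [hk], ← Finset.sum_ite_eq' (Finset.Icc (-(d' : ℤ)) (d' : ℤ)) k X.2]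
  refine Finset.sum_congr rfl fun i _ => ?_
  by_cases h1 : i = k
  · simp [h1]
  · by_cases h2 : i ≤ k
    · simp [h1, h2, h i (by omega)]
    · simp [h1, h2]

lemma val_le_BXC (d' : ℕ) (X : EC) (k j₀ : ℤ) (hj₀ : j₀ ∈ Finset.Icc (-(d' : ℤ)) (d' : ℤ))
    (hk : k ≤ j₀) : X.1 j₀ ≤ BXC d' X k := by
  have := Finset.single_le_sum
    (f := fun j => if k ≤ j then X.1 j else 0) (fun i _ => by split <;> simp) hj₀
  simpa [hk, BXC] using this

lemma val_le_SXC (d' : ℕ) (X : EC) (k j₀ : ℤ) (hj₀ : j₀ ∈ Finset.Icc (-(d' : ℤ)) (d' : ℤ))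
    (hk : j₀ ≤ k) : X.2 j₀ ≤ SXC d' X k := by
  have := Finset.single_le_sum
    (f := fun j => if j ≤ k then X.2 j else 0) (fun i _ => by split <;> simp) hj₀
  simpa [hk, SXC] using this

lemma gXC_mono (d' : ℕ) (X : EC) {k k' : ℤ} (h : k ≤ k') : gXC d' X k ≤ gXC d' X k' := by
  rw [gXC, gXC]
  have hS : (SXC d' X k : ℤ) ≤ SXC d' X k' := by
    rw [SXC_cast, SXC_cast]
    exact sum_ite_mono'' _ _ (fun j _ => by positivity) (fun j hj => by omega)
  have hB : (BXC d' X k' : ℤ) ≤ BXC d' X k := by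
    rw [BXC_cast, BXC_cast]
    exact sum_ite_mono'' _ _ (fun j _ => by positivity) (fun j hj => by omega)
  omega

lemma gXC_step (d' : ℕ) (X : EC) (k : ℤ) :
    gXC d' X (k + 1) = gXC d' X k
      + (if k + 1 ∈ Finset.Icc (-(d' : ℤ)) (d' : ℤ) then (X.2 (k + 1) : ℤ) else 0)
      + (if k ∈ Finset.Icc (-(d' : ℤ)) (d' : ℤ) then (X.1 k : ℤ) else 0) := by
  have hS : (SXC d' X (k + 1) : ℤ) = (SXC d' X k : ℤ)
      + (if k + 1 ∈ Finset.Icc (-(d' : ℤ)) (d' : ℤ) then (X.2 (k + 1) : ℤ) else 0) := by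
    rw [SXC_cast, SXC_cast, sum_ite_le_succ'']
  have hB : (BXC d' X k : ℤ) = (BXC d' X (k + 1) : ℤ)
      + (if k ∈ Finset.Icc (-(d' : ℤ)) (d' : ℤ) then (X.1 k : ℤ) else 0) := by
    rw [BXC_cast, BXC_cast, sum_ite_ge_pred'']
  rw [gXC, gXC]
  omega

/-- Decomposition of `g_Y` as `g_X` plus the contribution of `Z = Y − X`. -/
lemma gXC_decomp (d' : ℕ) (X Y : EC) (k : ℤ) :
    gXC d' Y k = gXC d' X k
      + (∑ j ∈ Finset.Icc (-(d' : ℤ)) (d' : ℤ), if j ≤ k then ((Y.2 j : ℤ) - X.2 j) else 0)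
      - (∑ j ∈ Finset.Icc (-(d' : ℤ)) (d' : ℤ), if k ≤ j then ((Y.1 j : ℤ) - X.1 j) else 0) := by
  have h1 : (SXC d' Y k : ℤ) - SXC d' X k =
      ∑ j ∈ Finset.Icc (-(d' : ℤ)) (d' : ℤ), if j ≤ k then ((Y.2 j : ℤ) - X.2 j) else 0 := by
    rw [SXC_cast, SXC_cast, ← Finset.sum_sub_distrib]
    exact Finset.sum_congr rfl fun i _ => by split <;> simp
  have h2 : (BXC d' Y k : ℤ) - BXC d' X k =
      ∑ j ∈ Finset.Icc (-(d' : ℤ)) (d' : ℤ), if k ≤ j then ((Y.1 j : ℤ) - X.1 j) else 0 := by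
    rw [BXC_cast, BXC_cast, ← Finset.sum_sub_distrib]
    exact Finset.sum_congr rfl fun i _ => by split <;> simp
  rw [gXC, gXC]
  omega


lemma clearC_fixed (d' : ℕ) (X : EC) (hX : X ∈ L0 d') : clearC d' X = X := by
  obtain ⟨⟨hs1, hs2, hne1, hne2⟩, hba⟩ := hX
  obtain ⟨⟨hbl, hbu⟩, hbpos, hbabove⟩ := bC_spec d' X hs1 hne1
  obtain ⟨⟨hal, hau⟩, hapos, habelow⟩ := aC_spec d' X hs2 hne2
  set b := bC d' X with hbdef
  set a := aC d' X with hadef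
  have hSb : SXC d' X b = 0 := SXC_eq_zero _ _ _ (fun j hj => habelow j (by omega))
  have hBb : BXC d' X b = X.1 b := BXC_eq_single _ _ _ (Finset.mem_Icc.mpr ⟨hbl, hbu⟩) hbabove
  have hSa : SXC d' X a = X.2 a := SXC_eq_single _ _ _ (Finset.mem_Icc.mpr ⟨hal, hau⟩) habelow
  have hBa : BXC d' X a = 0 := BXC_eq_zero _ _ _ (fun j hj => hbabove j (by omega))
  have hgb : gXC d' X b = -(X.1 b : ℤ) := by rw [gXC, hSb, hBb]; push_cast; ring
  have hga : gXC d' X a = (X.2 a : ℤ) := by rw [gXC, hSa, hBa]; push_cast; ring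
  have hpB : pBC d' X = b := by
    refine pB_eq d' X b (Finset.mem_Icc.mpr ⟨hbl, hbu⟩) (by rw [hgb]; omega) ?_
    intro k hk hbk
    have hBk : BXC d' X k = 0 := BXC_eq_zero _ _ _ (fun j hj => hbabove j (by omega))
    rw [gXC, hBk]
    omega
  have hpA : pAC d' X = a := by
    refine pA_eq d' X a (Finset.mem_Icc.mpr ⟨hal, hau⟩) (by rw [hga]; omega) ?_
    intro k hk hka
    have hSk : SXC d' X k = 0 := SXC_eq_zero _ _ _ (fun j hj => habelow j (by omega))
    rw [gXC, hSk]
    omega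
  have hplus : clearPlusC d' X = X.1 := by
    rw [clearPlusC, hpB, hgb, if_pos (le_refl _)]
    funext j
    rw [tauLowC]
    split
    · rfl
    · rename_i hcond
      symm
      by_contra h0
      have hjI := hs1 j h0
      have hjb : j ≤ b := by
        by_contra hh
        exact h0 (hbabove j (by omega))
      exact hcond ⟨hjb, hjI⟩
  have hminus : clearMinusC d' X = X.2 := by
    rw [clearMinusC, hpA, hga, if_pos (le_refl _)]
    funext j
    rw [tauHighC]
    split
    · rfl
    · rename_i hcond
      symm
      by_contra h0
      have hjI := hs2 j h0
      have hja : a ≤ j := by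
        by_contra hh
        exact h0 (habelow j (by omega))
      exact hcond ⟨hja, hjI⟩
  rw [clearC, hplus, hminus]


lemma suppIn_zero {d' : ℕ} {Z : VecC} (h : suppIn d' Z) {j : ℤ}
    (hj : ¬ (-(d' : ℤ) ≤ j ∧ j ≤ (d' : ℤ))) : Z j = 0 := by
  by_contra h0
  exact hj (h j h0)

lemma GammaM_subset_pre (d' : ℕ) (X : EC) (hX : X ∈ L0 d') (Y : EC)
    (hY : Y ∈ GammaM d' X) : clearC d' Y = X := by
  obtain ⟨hYEm, hle, hmass, hst', hsa', hbt'⟩ := hY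
  obtain ⟨hXEm, hba⟩ := hX
  obtain ⟨hs1, hs2, hne1, hne2⟩ := hXEm
  obtain ⟨hYs1, hYs2, hYne1, hYne2⟩ := hYEm
  obtain ⟨⟨hbl, hbu⟩, hbpos, hbabove⟩ := bC_spec d' X hs1 hne1
  obtain ⟨⟨hal, hau⟩, hapos, habelow⟩ := aC_spec d' X hs2 hne2
  set b := bC d' X with hbdef
  set a := aC d' X with hadef
  by_cases hDm : ((Finset.Icc (-(d' : ℤ)) (d' : ℤ)).filter fun j => X.2 j < Y.2 j).Nonempty
  case neg =>
    have hY2 : Y.2 = X.2 := by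
      funext j
      by_cases hjI : -(d' : ℤ) ≤ j ∧ j ≤ (d' : ℤ)
      · have hnlt : ¬ X.2 j < Y.2 j := fun hlt =>
          hDm ⟨j, Finset.mem_filter.mpr ⟨Finset.mem_Icc.mpr hjI, hlt⟩⟩
        have := (hle j).2
        omega
      · rw [suppIn_zero hYs2 hjI, suppIn_zero hs2 hjI]
    have hzero : (∑ j ∈ Finset.Icc (-(d' : ℤ)) (d' : ℤ), ((Y.1 j : ℤ) - (X.1 j : ℤ))) = 0 := by
      rw [hmass, hY2]
      exact Finset.sum_eq_zero fun i _ => by ring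
    have hY1 : Y.1 = X.1 := by
      funext j
      by_cases hjI : -(d' : ℤ) ≤ j ∧ j ≤ (d' : ℤ)
      · have heach := (Finset.sum_eq_zero_iff_of_nonneg
          (fun i (_ : i ∈ Finset.Icc (-(d' : ℤ)) (d' : ℤ)) => by have := (hle i).1; omega)).mp hzero j
          (Finset.mem_Icc.mpr hjI)
        omega
      · rw [suppIn_zero hYs1 hjI, suppIn_zero hs1 hjI]
    have hYX : Y = X := Prod.ext hY1 hY2
    rw [hYX]
    exact clearC_fixed d' X ⟨⟨hs1, hs2, hne1, hne2⟩, hba⟩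
  case pos =>
  have hDp : ((Finset.Icc (-(d' : ℤ)) (d' : ℤ)).filter fun j => X.1 j < Y.1 j).Nonempty := by
    by_contra hDp
    have hY1 : Y.1 = X.1 := by
      funext j
      by_cases hjI : -(d' : ℤ) ≤ j ∧ j ≤ (d' : ℤ)
      · have hnlt : ¬ X.1 j < Y.1 j := fun hlt =>
          hDp ⟨j, Finset.mem_filter.mpr ⟨Finset.mem_Icc.mpr hjI, hlt⟩⟩
        have := (hle j).1
        omega
      · rw [suppIn_zero hYs1 hjI, suppIn_zero hs1 hjI]
    have hzero : (∑ j ∈ Finset.Icc (-(d' : ℤ)) (d' : ℤ), ((Y.2 j : ℤ) - (X.2 j : ℤ))) = 0 := by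
      rw [← hmass, hY1]
      exact Finset.sum_eq_zero fun i _ => by ring
    obtain ⟨j0, hj0⟩ := hDm
    rw [Finset.mem_filter] at hj0
    have heach := (Finset.sum_eq_zero_iff_of_nonneg
      (fun i (_ : i ∈ Finset.Icc (-(d' : ℤ)) (d' : ℤ)) => by have := (hle i).2; omega)).mp hzero j0 hj0.1
    omega
  -- s and t
  set s := ((Finset.Icc (-(d' : ℤ)) (d' : ℤ)).filter fun j => X.2 j < Y.2 j).max' hDm with hsdef
  set t := ((Finset.Icc (-(d' : ℤ)) (d' : ℤ)).filter fun j => X.1 j < Y.1 j).min' hDp with htdef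
  have hsmem := Finset.max'_mem _ hDm
  rw [Finset.mem_filter, Finset.mem_Icc] at hsmem
  have htmem := Finset.min'_mem _ hDp
  rw [Finset.mem_filter, Finset.mem_Icc] at htmem
  have hst : s ≤ t := by
    rw [supD, dif_pos hDm, infD, dif_pos hDp] at hst'
    exact hst'
  have hsa : s ≤ a := by
    rw [supD, dif_pos hDm] at hsa'
    exact hsa'
  have hbt : b ≤ t := by
    rw [infD, dif_pos hDp] at hbt'
    exact hbt'
  have hZm0 : ∀ j, s < j → Y.2 j = X.2 j := by
    intro j hj
    by_cases hjI : -(d' : ℤ) ≤ j ∧ j ≤ (d' : ℤ)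
    · have hnlt : ¬ X.2 j < Y.2 j := by
        intro hlt
        have hjs : j ≤ s := Finset.le_max' _ j
          (Finset.mem_filter.mpr ⟨Finset.mem_Icc.mpr hjI, hlt⟩)
        omega
      have := (hle j).2
      omega
    · rw [suppIn_zero hYs2 hjI, suppIn_zero hs2 hjI]
  have hZp0 : ∀ j, j < t → Y.1 j = X.1 j := by
    intro j hj
    by_cases hjI : -(d' : ℤ) ≤ j ∧ j ≤ (d' : ℤ)
    · have hnlt : ¬ X.1 j < Y.1 j := by
        intro hlt
        have hjt : t ≤ j := Finset.min'_le _ j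
          (Finset.mem_filter.mpr ⟨Finset.mem_Icc.mpr hjI, hlt⟩)
        omega
      have := (hle j).1
      omega
    · rw [suppIn_zero hYs1 hjI, suppIn_zero hs1 hjI]
  -- masses
  set m := ∑ j ∈ Finset.Icc (-(d' : ℤ)) (d' : ℤ), ((Y.2 j : ℤ) - (X.2 j : ℤ)) with hmdef
  have hmnn : ∀ j ∈ Finset.Icc (-(d' : ℤ)) (d' : ℤ), (0 : ℤ) ≤ (Y.2 j : ℤ) - (X.2 j : ℤ) :=
    fun j _ => by have := (hle j).2; omega
  have hpnn : ∀ j ∈ Finset.Icc (-(d' : ℤ)) (d' : ℤ), (0 : ℤ) ≤ (Y.1 j : ℤ) - (X.1 j : ℤ) :=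
    fun j _ => by have := (hle j).1; omega
  have hSZtop : ∀ k, s ≤ k →
      (∑ j ∈ Finset.Icc (-(d' : ℤ)) (d' : ℤ), if j ≤ k then ((Y.2 j : ℤ) - (X.2 j : ℤ)) else 0) = m := by
    intro k hk
    refine sum_ite_eq_total'' _ fun j _ hj => ?_
    rw [hZm0 j (by omega)]
    ring
  have hBZtop : ∀ k, k ≤ t →
      (∑ j ∈ Finset.Icc (-(d' : ℤ)) (d' : ℤ), if k ≤ j then ((Y.1 j : ℤ) - (X.1 j : ℤ)) else 0) = m := by
    intro k hk
    rw [sum_ite_eq_total'' _ fun j _ hj => by rw [hZp0 j (by omega)]; ring]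
    exact hmass
  have hSZle : ∀ k, (∑ j ∈ Finset.Icc (-(d' : ℤ)) (d' : ℤ), if j ≤ k then ((Y.2 j : ℤ) - (X.2 j : ℤ)) else 0) ≤ m :=
    fun k => sum_ite_le'' _ hmnn
  have hSZnn : ∀ k, 0 ≤ (∑ j ∈ Finset.Icc (-(d' : ℤ)) (d' : ℤ), if j ≤ k then ((Y.2 j : ℤ) - (X.2 j : ℤ)) else 0) :=
    fun k => sum_ite_nonneg'' _ hmnn
  have hBZle : ∀ k, (∑ j ∈ Finset.Icc (-(d' : ℤ)) (d' : ℤ), if k ≤ j then ((Y.1 j : ℤ) - (X.1 j : ℤ)) else 0) ≤ m := by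
    intro k
    calc (∑ j ∈ Finset.Icc (-(d' : ℤ)) (d' : ℤ), if k ≤ j then ((Y.1 j : ℤ) - (X.1 j : ℤ)) else 0)
        ≤ ∑ j ∈ Finset.Icc (-(d' : ℤ)) (d' : ℤ), ((Y.1 j : ℤ) - (X.1 j : ℤ)) := sum_ite_le'' _ hpnn
      _ = m := hmass
  have hBZnn : ∀ k, 0 ≤ (∑ j ∈ Finset.Icc (-(d' : ℤ)) (d' : ℤ), if k ≤ j then ((Y.1 j : ℤ) - (X.1 j : ℤ)) else 0) :=
    fun k => sum_ite_nonneg'' _ hpnn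
  have hSZs1 : (∑ j ∈ Finset.Icc (-(d' : ℤ)) (d' : ℤ), if j ≤ s - 1 then ((Y.2 j : ℤ) - (X.2 j : ℤ)) else 0) ≤ m - 1 := by
    have hsplit := sum_split'' (s := Finset.Icc (-(d' : ℤ)) (d' : ℤ)) (fun j => ((Y.2 j : ℤ) - (X.2 j : ℤ))) (s - 1)
    have hsingle : (1 : ℤ) ≤
        ∑ j ∈ Finset.Icc (-(d' : ℤ)) (d' : ℤ), if s - 1 + 1 ≤ j then ((Y.2 j : ℤ) - (X.2 j : ℤ)) else 0 := by
      have := single_le_sum_ite'' (s := Finset.Icc (-(d' : ℤ)) (d' : ℤ))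
        (f := fun j => ((Y.2 j : ℤ) - (X.2 j : ℤ))) (fun j => s - 1 + 1 ≤ j) hmnn
        (Finset.mem_Icc.mpr ⟨hsmem.1.1, hsmem.1.2⟩) (by omega)
      have h2 := hsmem.2
      omega
    omega
  have hBZt1 : (∑ j ∈ Finset.Icc (-(d' : ℤ)) (d' : ℤ), if t + 1 ≤ j then ((Y.1 j : ℤ) - (X.1 j : ℤ)) else 0) ≤ m - 1 := by
    have hsplit := sum_split'' (s := Finset.Icc (-(d' : ℤ)) (d' : ℤ)) (fun j => ((Y.1 j : ℤ) - (X.1 j : ℤ))) t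
    have hsingle : (1 : ℤ) ≤
        ∑ j ∈ Finset.Icc (-(d' : ℤ)) (d' : ℤ), if j ≤ t then ((Y.1 j : ℤ) - (X.1 j : ℤ)) else 0 := by
      have := single_le_sum_ite'' (s := Finset.Icc (-(d' : ℤ)) (d' : ℤ))
        (f := fun j => ((Y.1 j : ℤ) - (X.1 j : ℤ))) (fun j => j ≤ t) hpnn
        (Finset.mem_Icc.mpr ⟨htmem.1.1, htmem.1.2⟩) (by omega)
      have h2 := htmem.2
      omega
    have := hmass
    omega
  have hg := gXC_decomp d' X Y
  -- values of g_X
  have hSX0 : ∀ k, k < a → SXC d' X k = 0 :=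
    fun k hk => SXC_eq_zero _ _ _ (fun j hj => habelow j (by omega))
  have hBX0 : ∀ k, b < k → BXC d' X k = 0 :=
    fun k hk => BXC_eq_zero _ _ _ (fun j hj => hbabove j (by omega))
  have hgXb : gXC d' X b = -(X.1 b : ℤ) := by
    rw [gXC, hSX0 b hba,
      BXC_eq_single _ _ _ (Finset.mem_Icc.mpr ⟨hbl, hbu⟩) hbabove]
    push_cast
    ring
  have hgXa : gXC d' X a = (X.2 a : ℤ) := by
    rw [gXC, SXC_eq_single _ _ _ (Finset.mem_Icc.mpr ⟨hal, hau⟩) habelow,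
      BXC_eq_zero _ _ _ (fun j hj => hbabove j (by omega))]
    push_cast
    ring
  -- buy side
  have hplus : clearPlusC d' Y = X.1 := by
    by_cases hsb : s ≤ b
    · have hgYb : gXC d' Y b = -(X.1 b : ℤ) := by
        rw [hg b, hSZtop b hsb, hBZtop b hbt, hgXb]
        ring
      have hpB : pBC d' Y = b := by
        refine pB_eq d' Y b (Finset.mem_Icc.mpr ⟨hbl, hbu⟩) (by rw [hgYb]; omega) ?_
        intro k hk hbk
        rw [hg k, hSZtop k (by omega), gXC, hBX0 k hbk]
        have := hBZle k
        have : (0 : ℤ) ≤ (SXC d' X k : ℤ) := by positivity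
        omega
      by_cases hbt2 : b < t
      · have hcond : gXC d' Y (pBC d' Y) ≤ -(Y.1 (pBC d' Y) : ℤ) := by
          rw [hpB, hgYb, hZp0 b hbt2]
        rw [clearPlusC, if_pos hcond, hpB]
        funext j
        rw [tauLowC]
        split
        · rename_i hc
          exact hZp0 j (by omega)
        · rename_i hc
          symm
          by_cases hjb : b < j
          · exact hbabove j hjb
          · exact suppIn_zero hs1 (fun hjI => hc ⟨by omega, hjI⟩)
      · have htb : t = b := by omega
        have hYb : X.1 b < Y.1 b := by rw [← htb]; exact htmem.2
        have hcond : ¬ (gXC d' Y (pBC d' Y) ≤ -(Y.1 (pBC d' Y) : ℤ)) := by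
          rw [hpB, hgYb]
          omega
        rw [clearPlusC, if_neg hcond, hpB]
        funext j
        have hcoef : (max 0 (-(gXC d' Y b))).toNat = X.1 b := by
          rw [hgYb]
          simp
        rw [hcoef]
        by_cases hjb : j = b
        · have h1 : tauLowC d' (b - 1) Y.1 b = 0 := by
            rw [tauLowC]; exact if_neg (by omega)
          have h2 : eC d' b b = 1 := by
            rw [eC]; exact if_pos ⟨rfl, hbl, hbu⟩
          rw [hjb, h1, h2]
          simp
        · have h2 : eC d' b j = 0 := by
            rw [eC]; exact if_neg (fun hc => hjb hc.1)
          rw [h2, mul_zero, add_zero, tauLowC]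
          split
          · rename_i hc
            exact hZp0 j (by omega)
          · rename_i hc
            symm
            by_cases hjb2 : b < j
            · exact hbabove j hjb2
            · exact suppIn_zero hs1 (fun hjI => hc ⟨by omega, hjI⟩)
    · -- b < s, pB = s - 1
      have hbs : b < s := by omega
      have hs1I : -(d' : ℤ) ≤ s - 1 ∧ s - 1 ≤ (d' : ℤ) := by
        constructor <;> omega
      have hgYs1 : gXC d' Y (s - 1) = -(BXC d' X (s - 1) : ℤ)
          + (∑ j ∈ Finset.Icc (-(d' : ℤ)) (d' : ℤ), if j ≤ s - 1 then ((Y.2 j : ℤ) - (X.2 j : ℤ)) else 0) - m := by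
        rw [hg (s - 1), hBZtop (s - 1) (by omega), gXC, hSX0 (s - 1) (by omega)]
        push_cast
        ring
      have hpB : pBC d' Y = s - 1 := by
        refine pB_eq d' Y (s - 1) (Finset.mem_Icc.mpr hs1I) ?_ ?_
        · rw [hgYs1]
          have := hSZs1
          have : (0 : ℤ) ≤ (BXC d' X (s - 1) : ℤ) := by positivity
          omega
        · intro k hk hsk
          rw [hg k, hSZtop k (by omega), gXC, hBX0 k (by omega)]
          have := hBZle k
          have : (0 : ℤ) ≤ (SXC d' X k : ℤ) := by positivity
          omega
      have hcond : gXC d' Y (pBC d' Y) ≤ -(Y.1 (pBC d' Y) : ℤ) := by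
        rw [hpB, hgYs1, hZp0 (s - 1) (by omega)]
        have hv := val_le_BXC d' X (s - 1) (s - 1) (Finset.mem_Icc.mpr hs1I) le_rfl
        have := hSZle (s - 1)
        omega
      rw [clearPlusC, if_pos hcond, hpB]
      funext j
      rw [tauLowC]
      split
      · rename_i hc
        exact hZp0 j (by omega)
      · rename_i hc
        symm
        by_cases hjb : b < j
        · exact hbabove j hjb
        · exact suppIn_zero hs1 (fun hjI => hc ⟨by omega, hjI⟩)
  -- sell side
  have hminus : clearMinusC d' Y = X.2 := by
    by_cases hta : a ≤ t
    · have hgYa : gXC d' Y a = (X.2 a : ℤ) := by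
        rw [hg a, hSZtop a hsa, hBZtop a hta, hgXa]
        ring
      have hpA : pAC d' Y = a := by
        refine pA_eq d' Y a (Finset.mem_Icc.mpr ⟨hal, hau⟩) (by rw [hgYa]; omega) ?_
        intro k hk hka
        rw [hg k, hBZtop k (by omega), gXC, hSX0 k hka]
        have := hSZle k
        have : (0 : ℤ) ≤ (BXC d' X k : ℤ) := by positivity
        omega
      by_cases hsa2 : s < a
      · have hcond : (Y.2 (pAC d' Y) : ℤ) ≤ gXC d' Y (pAC d' Y) := by
          rw [hpA, hgYa, hZm0 a hsa2]
        rw [clearMinusC, if_pos hcond, hpA]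
        funext j
        rw [tauHighC]
        split
        · rename_i hc
          exact hZm0 j (by omega)
        · rename_i hc
          symm
          by_cases hja : j < a
          · exact habelow j hja
          · exact suppIn_zero hs2 (fun hjI => hc ⟨by omega, hjI⟩)
      · have hsa3 : s = a := by omega
        have hYa : X.2 a < Y.2 a := by rw [← hsa3]; exact hsmem.2
        have hcond : ¬ ((Y.2 (pAC d' Y) : ℤ) ≤ gXC d' Y (pAC d' Y)) := by
          rw [hpA, hgYa]
          omega
        rw [clearMinusC, if_neg hcond, hpA]
        funext j
        have hcoef : (max 0 (gXC d' Y a)).toNat = X.2 a := by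
          rw [hgYa]
          simp
        rw [hcoef]
        by_cases hja : j = a
        · have h1 : tauHighC d' (a + 1) Y.2 a = 0 := by
            rw [tauHighC]; exact if_neg (by omega)
          have h2 : eC d' a a = 1 := by
            rw [eC]; exact if_pos ⟨rfl, hal, hau⟩
          rw [hja, h1, h2]
          simp
        · have h2 : eC d' a j = 0 := by
            rw [eC]; exact if_neg (fun hc => hja hc.1)
          rw [h2, mul_zero, add_zero, tauHighC]
          split
          · rename_i hc
            exact hZm0 j (by omega)
          · rename_i hc
            symm
            by_cases hja2 : j < a
            · exact habelow j hja2
            · exact suppIn_zero hs2 (fun hjI => hc ⟨by omega, hjI⟩)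
    · -- t < a, pA = t + 1
      have hta2 : t < a := by omega
      have ht1I : -(d' : ℤ) ≤ t + 1 ∧ t + 1 ≤ (d' : ℤ) := by
        constructor <;> omega
      have hgYt1 : gXC d' Y (t + 1) = (SXC d' X (t + 1) : ℤ)
          + m - (∑ j ∈ Finset.Icc (-(d' : ℤ)) (d' : ℤ), if t + 1 ≤ j then ((Y.1 j : ℤ) - (X.1 j : ℤ)) else 0) := by
        rw [hg (t + 1), hSZtop (t + 1) (by omega), gXC, hBX0 (t + 1) (by omega)]
        push_cast
        ring
      have hpA : pAC d' Y = t + 1 := by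
        refine pA_eq d' Y (t + 1) (Finset.mem_Icc.mpr ht1I) ?_ ?_
        · rw [hgYt1]
          have := hBZt1
          have : (0 : ℤ) ≤ (SXC d' X (t + 1) : ℤ) := by positivity
          omega
        · intro k hk hkt
          rw [hg k, hBZtop k (by omega), gXC, hSX0 k (by omega)]
          have := hSZle k
          have : (0 : ℤ) ≤ (BXC d' X k : ℤ) := by positivity
          omega
      have hcond : (Y.2 (pAC d' Y) : ℤ) ≤ gXC d' Y (pAC d' Y) := by
        rw [hpA, hgYt1, hZm0 (t + 1) (by omega)]
        have hv := val_le_SXC d' X (t + 1) (t + 1) (Finset.mem_Icc.mpr ht1I) le_rfl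
        have := hBZle (t + 1)
        omega
      rw [clearMinusC, if_pos hcond, hpA]
      funext j
      rw [tauHighC]
      split
      · rename_i hc
        exact hZm0 j (by omega)
      · rename_i hc
        symm
        by_cases hja : j < a
        · exact habelow j hja
        · exact suppIn_zero hs2 (fun hjI => hc ⟨by omega, hjI⟩)
  rw [clearC, hplus, hminus]


lemma SXC_mono (d' : ℕ) (X : EC) {k k' : ℤ} (h : k ≤ k') : SXC d' X k ≤ SXC d' X k' :=
  Finset.sum_le_sum fun i _ => by
    by_cases h1 : i ≤ k
    · rw [if_pos h1, if_pos (by omega)]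
    · rw [if_neg h1]
      exact Nat.zero_le _

lemma BXC_anti (d' : ℕ) (X : EC) {k k' : ℤ} (h : k ≤ k') : BXC d' X k' ≤ BXC d' X k :=
  Finset.sum_le_sum fun i _ => by
    by_cases h1 : k' ≤ i
    · rw [if_pos h1, if_pos (by omega)]
    · rw [if_neg h1]
      exact Nat.zero_le _

lemma clear_preimage_sub (d' : ℕ) (X : EC) (hX : X ∈ L0 d') (Y : EC) (hYEm : Y ∈ Em d')
    (hC : clearC d' Y = X) : Y ∈ GammaM d' X := by
  obtain ⟨hXEm, hba⟩ := hX
  obtain ⟨hs1, hs2, hne1, hne2⟩ := hXEm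
  obtain ⟨hYs1, hYs2, hYne1, hYne2⟩ := hYEm
  have hCp : clearPlusC d' Y = X.1 := congrArg Prod.fst hC
  have hCm : clearMinusC d' Y = X.2 := congrArg Prod.snd hC
  -- Step 1 : the two filters are nonempty
  have hFB : ((Finset.Icc (-(d' : ℤ)) (d' : ℤ)).filter fun k => gXC d' Y k < 0).Nonempty := by
    by_contra hem
    have hpBv : pBC d' Y = -(d' : ℤ) - 1 := by rw [pBC, dif_neg hem]
    have h0 : X.1 = (0 : VecC) := by
      funext j
      rw [← hCp, clearPlusC, hpBv]
      split
      · rw [tauLowC, if_neg (by omega)]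
        simp
      · have h1 : tauLowC d' (-(d' : ℤ) - 1 - 1) Y.1 j = 0 := by
          rw [tauLowC]; exact if_neg (by omega)
        have h2 : eC d' (-(d' : ℤ) - 1) j = 0 := by
          rw [eC]; exact if_neg (by omega)
        simp [h1, h2]
    exact hne1 h0
  have hFA : ((Finset.Icc (-(d' : ℤ)) (d' : ℤ)).filter fun k => 0 < gXC d' Y k).Nonempty := by
    by_contra hem
    have hpAv : pAC d' Y = (d' : ℤ) + 1 := by rw [pAC, dif_neg hem]
    have h0 : X.2 = (0 : VecC) := by
      funext j
      rw [← hCm, clearMinusC, hpAv]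
      split
      · rw [tauHighC, if_neg (by omega)]
        simp
      · have h1 : tauHighC d' ((d' : ℤ) + 1 + 1) Y.2 j = 0 := by
          rw [tauHighC]; exact if_neg (by omega)
        have h2 : eC d' ((d' : ℤ) + 1) j = 0 := by
          rw [eC]; exact if_neg (by omega)
        simp [h1, h2]
    exact hne2 h0
  -- pB and pA
  set pB := pBC d' Y with hpBeq
  set pA := pAC d' Y with hpAeq
  have hpBmem : pB ∈ (Finset.Icc (-(d' : ℤ)) (d' : ℤ)).filter fun k => gXC d' Y k < 0 := by
    rw [hpBeq, pBC, dif_pos hFB]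
    exact Finset.max'_mem _ hFB
  have hpAmem : pA ∈ (Finset.Icc (-(d' : ℤ)) (d' : ℤ)).filter fun k => 0 < gXC d' Y k := by
    rw [hpAeq, pAC, dif_pos hFA]
    exact Finset.min'_mem _ hFA
  rw [Finset.mem_filter, Finset.mem_Icc] at hpBmem hpAmem
  obtain ⟨⟨hpBl, hpBu⟩, hgBneg⟩ := hpBmem
  obtain ⟨⟨hpAl, hpAu⟩, hgApos⟩ := hpAmem
  have hBabove : ∀ k, -(d' : ℤ) ≤ k → k ≤ (d' : ℤ) → pB < k → 0 ≤ gXC d' Y k := by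
    intro k h1 h2 h3
    by_contra h4
    have h5 : k ≤ pB := by
      rw [hpBeq, pBC, dif_pos hFB]
      exact Finset.le_max' _ k
        (Finset.mem_filter.mpr ⟨Finset.mem_Icc.mpr ⟨h1, h2⟩, by omega⟩)
    omega
  have hAbelow : ∀ k, -(d' : ℤ) ≤ k → k ≤ (d' : ℤ) → k < pA → gXC d' Y k ≤ 0 := by
    intro k h1 h2 h3
    by_contra h4
    have h5 : pA ≤ k := by
      rw [hpAeq, pAC, dif_pos hFA]
      exact Finset.min'_le _ k
        (Finset.mem_filter.mpr ⟨Finset.mem_Icc.mpr ⟨h1, h2⟩, by omega⟩)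
    omega
  have hpBA : pB < pA := by
    by_contra h
    have := gXC_mono d' Y (show pA ≤ pB by omega)
    omega
  -- zero gap
  have hgap : ∀ k, -(d' : ℤ) ≤ k → k ≤ (d' : ℤ) → pB < k → k < pA → gXC d' Y k = 0 :=
    fun k h1 h2 h3 h4 => le_antisymm (hAbelow k h1 h2 h4) (hBabove k h1 h2 h3)
  have hYm0 : ∀ j, pB + 1 < j → j < pA → Y.2 j = 0 := by
    intro j h1 h2
    by_cases hjI : -(d' : ℤ) ≤ j ∧ j ≤ (d' : ℤ)
    · have hj1I : -(d' : ℤ) ≤ j - 1 ∧ j - 1 ≤ (d' : ℤ) := ⟨by omega, by omega⟩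
      have e1 := gXC_step d' Y (j - 1)
      rw [show j - 1 + 1 = j by omega, if_pos (Finset.mem_Icc.mpr hjI),
        if_pos (Finset.mem_Icc.mpr hj1I)] at e1
      have g1 := hgap j hjI.1 hjI.2 (by omega) h2
      have g2 := hgap (j - 1) hj1I.1 hj1I.2 (by omega) (by omega)
      omega
    · exact suppIn_zero hYs2 hjI
  have hYp0 : ∀ j, pB < j → j < pA - 1 → Y.1 j = 0 := by
    intro j h1 h2
    by_cases hjI : -(d' : ℤ) ≤ j ∧ j ≤ (d' : ℤ)
    · have hj1I : -(d' : ℤ) ≤ j + 1 ∧ j + 1 ≤ (d' : ℤ) := ⟨by omega, by omega⟩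
      have e1 := gXC_step d' Y j
      rw [if_pos (Finset.mem_Icc.mpr hj1I), if_pos (Finset.mem_Icc.mpr hjI)] at e1
      have g1 := hgap j hjI.1 hjI.2 (by omega) (by omega)
      have g2 := hgap (j + 1) hj1I.1 hj1I.2 (by omega) (by omega)
      omega
    · exact suppIn_zero hYs1 hjI
  -- step identities
  have hstepB : (BXC d' Y pB : ℤ) = (BXC d' Y (pB + 1) : ℤ) + (Y.1 pB : ℤ) := by
    rw [BXC_cast, BXC_cast, sum_ite_ge_pred'' _ pB,
      if_pos (Finset.mem_Icc.mpr ⟨hpBl, hpBu⟩)]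
  have hstepA : (SXC d' Y pA : ℤ) = (SXC d' Y (pA - 1) : ℤ) + (Y.2 pA : ℤ) := by
    have h := sum_ite_le_succ'' (s := Finset.Icc (-(d' : ℤ)) (d' : ℤ))
      (fun j => (Y.2 j : ℤ)) (pA - 1)
    rw [show pA - 1 + 1 = pA by omega, if_pos (Finset.mem_Icc.mpr ⟨hpAl, hpAu⟩)] at h
    rw [SXC_cast, SXC_cast, h]
  -- branch exclusivity
  have hcbcs : (gXC d' Y pB ≤ -(Y.1 pB : ℤ)) ∨ ((Y.2 pA : ℤ) ≤ gXC d' Y pA) := by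
    by_contra h
    push_neg at h
    obtain ⟨h1, h2⟩ := h
    rw [gXC] at h1 h2
    have m1 : SXC d' Y pB ≤ SXC d' Y (pA - 1) := SXC_mono d' Y (by omega)
    have m2 : BXC d' Y pA ≤ BXC d' Y (pB + 1) := BXC_anti d' Y (by omega)
    omega
  have hcb_pA : ¬ (gXC d' Y pB ≤ -(Y.1 pB : ℤ)) → pA = pB + 1 := by
    intro hncb
    by_contra hne
    have hlt : pB + 1 < pA := by omega
    have hg0 := hgap (pB + 1) (by omega) (by omega) (by omega) (by omega)
    rw [gXC] at hg0 hncb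
    have m1 : SXC d' Y pB ≤ SXC d' Y (pB + 1) := SXC_mono d' Y (by omega)
    omega
  have hcs_pA : ¬ ((Y.2 pA : ℤ) ≤ gXC d' Y pA) → pA = pB + 1 := by
    intro hncs
    by_contra hne
    have hlt : pB + 1 < pA := by omega
    have hg0 := hgap (pA - 1) (by omega) (by omega) (by omega) (by omega)
    rw [gXC] at hg0 hncs
    have m2 : BXC d' Y pA ≤ BXC d' Y (pA - 1) := BXC_anti d' Y (by omega)
    omega
  -- description of X.1
  have hX1or : ((gXC d' Y pB ≤ -(Y.1 pB : ℤ)) ∧ X.1 = tauLowC d' pB Y.1) ∨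
      (¬ (gXC d' Y pB ≤ -(Y.1 pB : ℤ)) ∧
        X.1 = fun j => tauLowC d' (pB - 1) Y.1 j + (-(gXC d' Y pB)).toNat * eC d' pB j) := by
    by_cases hcb : gXC d' Y pB ≤ -(Y.1 pB : ℤ)
    · left
      exact ⟨hcb, by rw [← hCp, clearPlusC, ← hpBeq, if_pos hcb]⟩
    · right
      refine ⟨hcb, ?_⟩
      rw [← hCp, clearPlusC, ← hpBeq, if_neg hcb]
      funext j
      rw [max_eq_right (by omega : (0 : ℤ) ≤ -(gXC d' Y pB))]
  have hX2or : (((Y.2 pA : ℤ) ≤ gXC d' Y pA) ∧ X.2 = tauHighC d' pA Y.2) ∨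
      (¬ ((Y.2 pA : ℤ) ≤ gXC d' Y pA) ∧
        X.2 = fun j => tauHighC d' (pA + 1) Y.2 j + (gXC d' Y pA).toNat * eC d' pA j) := by
    by_cases hcs : (Y.2 pA : ℤ) ≤ gXC d' Y pA
    · left
      exact ⟨hcs, by rw [← hCm, clearMinusC, ← hpAeq, if_pos hcs]⟩
    · right
      refine ⟨hcs, ?_⟩
      rw [← hCm, clearMinusC, ← hpAeq, if_neg hcs]
      funext j
      rw [max_eq_right (by omega : (0 : ℤ) ≤ gXC d' Y pA)]
  -- pointwise facts, buy side
  have heCpB : ∀ j, j ≠ pB → eC d' pB j = 0 := by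
    intro j hj
    rw [eC]; exact if_neg (fun hc => hj hc.1)
  have heCpB1 : eC d' pB pB = 1 := by
    rw [eC]; exact if_pos ⟨rfl, hpBl, hpBu⟩
  have heCpA : ∀ j, j ≠ pA → eC d' pA j = 0 := by
    intro j hj
    rw [eC]; exact if_neg (fun hc => hj hc.1)
  have heCpA1 : eC d' pA pA = 1 := by
    rw [eC]; exact if_pos ⟨rfl, hpAl, hpAu⟩
  have hX1_1 : ∀ j, X.1 j ≤ Y.1 j := by
    intro j
    rcases hX1or with ⟨hcb, hx⟩ | ⟨hncb, hx⟩
    · rw [hx, tauLowC]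
      split
      · exact le_refl _
      · exact Nat.zero_le _
    · rw [hx]
      dsimp only
      by_cases hj : j = pB
      · subst hj
        rw [tauLowC, if_neg (by omega), heCpB1, mul_one, zero_add]
        have : ((-(gXC d' Y pB)).toNat : ℤ) = -(gXC d' Y pB) :=
          Int.toNat_of_nonneg (by omega)
        omega
      · rw [heCpB j hj, mul_zero, add_zero, tauLowC]
        split
        · exact le_refl _
        · exact Nat.zero_le _
  have hX1_2 : ∀ j, pB < j → X.1 j = 0 := by
    intro j hj
    rcases hX1or with ⟨hcb, hx⟩ | ⟨hncb, hx⟩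
    · rw [hx, tauLowC]
      exact if_neg (by omega)
    · rw [hx]
      dsimp only
      rw [heCpB j (by omega), mul_zero, add_zero, tauLowC]
      exact if_neg (by omega)
  have hX1_3 : ∀ j, -(d' : ℤ) ≤ j → j ≤ (d' : ℤ) → j < pB → X.1 j = Y.1 j := by
    intro j h1 h2 hj
    rcases hX1or with ⟨hcb, hx⟩ | ⟨hncb, hx⟩
    · rw [hx, tauLowC]
      exact if_pos ⟨by omega, h1, h2⟩
    · rw [hx]
      dsimp only
      rw [heCpB j (by omega), mul_zero, add_zero, tauLowC]
      exact if_pos ⟨by omega, h1, h2⟩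
  have hX1_4 : (gXC d' Y pB ≤ -(Y.1 pB : ℤ)) → X.1 pB = Y.1 pB := by
    intro hcb
    rcases hX1or with ⟨_, hx⟩ | ⟨hncb, hx⟩
    · rw [hx, tauLowC]
      exact if_pos ⟨le_refl _, hpBl, hpBu⟩
    · exact absurd hcb hncb
  -- pointwise facts, sell side
  have hX2_1 : ∀ j, X.2 j ≤ Y.2 j := by
    intro j
    rcases hX2or with ⟨hcs, hx⟩ | ⟨hncs, hx⟩
    · rw [hx, tauHighC]
      split
      · exact le_refl _
      · exact Nat.zero_le _
    · rw [hx]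
      dsimp only
      by_cases hj : j = pA
      · subst hj
        rw [tauHighC, if_neg (by omega), heCpA1, mul_one, zero_add]
        have : ((gXC d' Y pA).toNat : ℤ) = gXC d' Y pA :=
          Int.toNat_of_nonneg (by omega)
        omega
      · rw [heCpA j hj, mul_zero, add_zero, tauHighC]
        split
        · exact le_refl _
        · exact Nat.zero_le _
  have hX2_2 : ∀ j, j < pA → X.2 j = 0 := by
    intro j hj
    rcases hX2or with ⟨hcs, hx⟩ | ⟨hncs, hx⟩
    · rw [hx, tauHighC]
      exact if_neg (by omega)
    · rw [hx]
      dsimp only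
      rw [heCpA j (by omega), mul_zero, add_zero, tauHighC]
      exact if_neg (by omega)
  have hX2_3 : ∀ j, -(d' : ℤ) ≤ j → j ≤ (d' : ℤ) → pA < j → X.2 j = Y.2 j := by
    intro j h1 h2 hj
    rcases hX2or with ⟨hcs, hx⟩ | ⟨hncs, hx⟩
    · rw [hx, tauHighC]
      exact if_pos ⟨by omega, h1, h2⟩
    · rw [hx]
      dsimp only
      rw [heCpA j (by omega), mul_zero, add_zero, tauHighC]
      exact if_pos ⟨by omega, h1, h2⟩
  have hX2_4 : ((Y.2 pA : ℤ) ≤ gXC d' Y pA) → X.2 pA = Y.2 pA := by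
    intro hcs
    rcases hX2or with ⟨_, hx⟩ | ⟨hncs, hx⟩
    · rw [hx, tauHighC]
      exact if_pos ⟨le_refl _, hpAl, hpAu⟩
    · exact absurd hcs hncs
  -- removed masses
  have hRPor : ((gXC d' Y pB ≤ -(Y.1 pB : ℤ)) ∧
        (∑ j ∈ Finset.Icc (-(d' : ℤ)) (d' : ℤ), ((Y.1 j : ℤ) - (X.1 j : ℤ)))
          = (BXC d' Y (pB + 1) : ℤ)) ∨
      (¬ (gXC d' Y pB ≤ -(Y.1 pB : ℤ)) ∧
        (∑ j ∈ Finset.Icc (-(d' : ℤ)) (d' : ℤ), ((Y.1 j : ℤ) - (X.1 j : ℤ)))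
          = (SXC d' Y pB : ℤ)) := by
    rcases hX1or with ⟨hcb, hx⟩ | ⟨hncb, hx⟩
    · left
      refine ⟨hcb, ?_⟩
      rw [BXC_cast]
      refine Finset.sum_congr rfl fun i hi => ?_
      rw [Finset.mem_Icc] at hi
      rw [hx, tauLowC]
      by_cases h1 : i ≤ pB
      · rw [if_pos ⟨h1, hi⟩, if_neg (by omega)]
        ring
      · rw [if_neg (fun hc => h1 hc.1), if_pos (by omega)]
        ring
    · right
      refine ⟨hncb, ?_⟩
      have hw : ((-(gXC d' Y pB)).toNat : ℤ) = -(gXC d' Y pB) :=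
        Int.toNat_of_nonneg (by omega)
      have h1 : (∑ j ∈ Finset.Icc (-(d' : ℤ)) (d' : ℤ), ((Y.1 j : ℤ) - (X.1 j : ℤ))) =
          (∑ j ∈ Finset.Icc (-(d' : ℤ)) (d' : ℤ), if pB + 1 ≤ j then (Y.1 j : ℤ) else 0)
          + ∑ j ∈ Finset.Icc (-(d' : ℤ)) (d' : ℤ),
              if j = pB then ((Y.1 pB : ℤ) + gXC d' Y pB) else 0 := by
        rw [← Finset.sum_add_distrib]
        refine Finset.sum_congr rfl fun i hi => ?_
        rw [Finset.mem_Icc] at hi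
        rw [hx]
        dsimp only
        by_cases h2 : i = pB
        · subst h2
          rw [tauLowC, if_neg (by omega), heCpB1, mul_one, if_pos rfl,
            if_neg (by omega)]
          push_cast [hw]
          ring
        · rw [heCpB i h2, mul_zero, add_zero, tauLowC, if_neg h2]
          by_cases h3 : i ≤ pB
          · rw [if_pos ⟨(by omega : i ≤ pB - 1), hi⟩, if_neg (by omega)]
            ring
          · rw [if_neg (fun hc => h3 (le_trans hc.1 (by omega))), if_pos (by omega)]
            ring
      rw [h1, Finset.sum_ite_eq' (Finset.Icc (-(d' : ℤ)) (d' : ℤ)) pB,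
        if_pos (Finset.mem_Icc.mpr ⟨hpBl, hpBu⟩), ← BXC_cast]
      rw [gXC] at *
      omega
  have hRMor : (((Y.2 pA : ℤ) ≤ gXC d' Y pA) ∧
        (∑ j ∈ Finset.Icc (-(d' : ℤ)) (d' : ℤ), ((Y.2 j : ℤ) - (X.2 j : ℤ)))
          = (SXC d' Y (pA - 1) : ℤ)) ∨
      (¬ ((Y.2 pA : ℤ) ≤ gXC d' Y pA) ∧
        (∑ j ∈ Finset.Icc (-(d' : ℤ)) (d' : ℤ), ((Y.2 j : ℤ) - (X.2 j : ℤ)))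
          = (BXC d' Y pA : ℤ)) := by
    rcases hX2or with ⟨hcs, hx⟩ | ⟨hncs, hx⟩
    · left
      refine ⟨hcs, ?_⟩
      rw [SXC_cast]
      refine Finset.sum_congr rfl fun i hi => ?_
      rw [Finset.mem_Icc] at hi
      rw [hx, tauHighC]
      by_cases h1 : pA ≤ i
      · rw [if_pos ⟨h1, hi⟩, if_neg (by omega)]
        ring
      · rw [if_neg (fun hc => h1 hc.1), if_pos (by omega)]
        ring
    · right
      refine ⟨hncs, ?_⟩
      have hw : ((gXC d' Y pA).toNat : ℤ) = gXC d' Y pA :=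
        Int.toNat_of_nonneg (by omega)
      have h1 : (∑ j ∈ Finset.Icc (-(d' : ℤ)) (d' : ℤ), ((Y.2 j : ℤ) - (X.2 j : ℤ))) =
          (∑ j ∈ Finset.Icc (-(d' : ℤ)) (d' : ℤ), if j ≤ pA - 1 then (Y.2 j : ℤ) else 0)
          + ∑ j ∈ Finset.Icc (-(d' : ℤ)) (d' : ℤ),
              if j = pA then ((Y.2 pA : ℤ) - gXC d' Y pA) else 0 := by
        rw [← Finset.sum_add_distrib]
        refine Finset.sum_congr rfl fun i hi => ?_
        rw [Finset.mem_Icc] at hi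
        rw [hx]
        dsimp only
        by_cases h2 : i = pA
        · subst h2
          rw [tauHighC, if_neg (by omega), heCpA1, mul_one, if_pos rfl,
            if_neg (by omega)]
          push_cast [hw]
          ring
        · rw [heCpA i h2, mul_zero, add_zero, tauHighC, if_neg h2]
          by_cases h3 : pA ≤ i
          · rw [if_pos ⟨(by omega : pA + 1 ≤ i), hi⟩, if_neg (by omega)]
            ring
          · rw [if_neg (fun hc => h3 (le_trans (by omega) hc.1)), if_pos (by omega)]
            ring
      rw [h1, Finset.sum_ite_eq' (Finset.Icc (-(d' : ℤ)) (d' : ℤ)) pA,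
        if_pos (Finset.mem_Icc.mpr ⟨hpAl, hpAu⟩), ← SXC_cast]
      rw [gXC] at *
      omega
  -- mass equality
  have hmassEq : (∑ j ∈ Finset.Icc (-(d' : ℤ)) (d' : ℤ), ((Y.1 j : ℤ) - (X.1 j : ℤ)))
      = ∑ j ∈ Finset.Icc (-(d' : ℤ)) (d' : ℤ), ((Y.2 j : ℤ) - (X.2 j : ℤ)) := by
    rcases hRPor with ⟨hcb, hRP⟩ | ⟨hncb, hRP⟩ <;>
      rcases hRMor with ⟨hcs, hRM⟩ | ⟨hncs, hRM⟩
    · -- both first branches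
      by_cases hpa : pA = pB + 1
      · rw [gXC] at hcb hcs
        rw [hRP, hRM, hpa, show pB + 1 - 1 = pB by omega]
        rw [hpa] at hcs hstepA
        rw [show pB + 1 - 1 = pB by omega] at hstepA
        omega
      · have hlt : pB + 1 < pA := by omega
        have hg0 := hgap (pA - 1) (by omega) (by omega) (by omega) (by omega)
        rw [gXC] at hg0
        have hBeq : (BXC d' Y (pB + 1) : ℤ) = (BXC d' Y (pA - 1) : ℤ) := by
          rw [BXC_cast, BXC_cast]
          refine Finset.sum_congr rfl fun i hi => ?_
          by_cases h1 : pA - 1 ≤ i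
          · rw [if_pos (by omega), if_pos h1]
          · by_cases h2 : pB + 1 ≤ i
            · rw [if_pos h2, if_neg h1, hYp0 i (by omega) (by omega)]
              simp
            · rw [if_neg h2, if_neg h1]
        rw [hRP, hRM]
        omega
    · have hpa := hcs_pA hncs
      rw [hRP, hRM, hpa]
    · have hpa := hcb_pA hncb
      rw [hRP, hRM, hpa, show pB + 1 - 1 = pB by omega]
    · rcases hcbcs with h | h
      · exact absurd h hncb
      · exact absurd h hncs
  -- support bounds
  have hbpB : bC d' X ≤ pB := by
    rw [bC]
    refine supD_le_of _ _ _ (fun j hj => ?_) hpBl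
    rw [suppC, Finset.mem_filter] at hj
    by_contra h
    have := hX1_2 j (by omega)
    omega
  have hpAa : pA ≤ aC d' X := by
    rw [aC]
    refine le_infD_of _ _ _ (fun j hj => ?_) hpAu
    rw [suppC, Finset.mem_filter] at hj
    by_contra h
    have := hX2_2 j (by omega)
    omega
  have hdiffPlo : ∀ j ∈ (Finset.Icc (-(d' : ℤ)) (d' : ℤ)).filter fun j => X.1 j < Y.1 j,
      pB ≤ j := by
    intro j hj
    rw [Finset.mem_filter, Finset.mem_Icc] at hj
    by_contra h
    have := hX1_3 j hj.1.1 hj.1.2 (by omega)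
    omega
  have hdiffMhi : ∀ j ∈ (Finset.Icc (-(d' : ℤ)) (d' : ℤ)).filter fun j => X.2 j < Y.2 j,
      j ≤ pA := by
    intro j hj
    rw [Finset.mem_filter, Finset.mem_Icc] at hj
    by_contra h
    have := hX2_3 j hj.1.1 hj.1.2 (by omega)
    omega
  have hcond5 : supD d' ((Finset.Icc (-(d' : ℤ)) (d' : ℤ)).filter fun j => X.2 j < Y.2 j)
      ≤ aC d' X :=
    le_trans (supD_le_of _ _ _ hdiffMhi hpAl) hpAa
  have hcond6 : bC d' X ≤
      infD d' ((Finset.Icc (-(d' : ℤ)) (d' : ℤ)).filter fun j => X.1 j < Y.1 j) :=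
    le_trans hbpB (le_infD_of _ _ _ hdiffPlo hpBu)
  have hcond4 : supD d' ((Finset.Icc (-(d' : ℤ)) (d' : ℤ)).filter fun j => X.2 j < Y.2 j)
      ≤ infD d' ((Finset.Icc (-(d' : ℤ)) (d' : ℤ)).filter fun j => X.1 j < Y.1 j) := by
    by_cases hcb : gXC d' Y pB ≤ -(Y.1 pB : ℤ)
    · refine le_trans (supD_le_of _ _ _ (fun j hj => ?_) (by omega))
        (le_infD_of _ _ _ (fun j hj => ?_) (by omega : pB + 1 ≤ (d' : ℤ)))
      · -- j ∈ diffM → j ≤ pB + 1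
        have hjA := hdiffMhi j hj
        rw [Finset.mem_filter, Finset.mem_Icc] at hj
        by_contra h
        by_cases hcs : (Y.2 pA : ℤ) ≤ gXC d' Y pA
        · by_cases hjpA : j = pA
          · have := hX2_4 hcs
            rw [hjpA] at hj
            omega
          · have := hYm0 j (by omega) (by omega)
            omega
        · have hpa := hcs_pA hcs
          omega
      · -- j ∈ diffP → pB + 1 ≤ j
        have hjB := hdiffPlo j hj
        rw [Finset.mem_filter, Finset.mem_Icc] at hj
        by_cases hjpB : j = pB
        · have := hX1_4 hcb
          rw [hjpB] at hj
          omega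
        · omega
    · have hcs : (Y.2 pA : ℤ) ≤ gXC d' Y pA := by
        rcases hcbcs with h | h
        · exact absurd h hcb
        · exact h
      have hpa := hcb_pA hcb
      refine le_trans (supD_le_of _ _ _ (fun j hj => ?_) hpBl)
        (le_infD_of _ _ _ hdiffPlo hpBu)
      have hjA := hdiffMhi j hj
      rw [Finset.mem_filter, Finset.mem_Icc] at hj
      by_cases hjpA : j = pA
      · have := hX2_4 hcs
        rw [hjpA] at hj
        omega
      · omega
  exact ⟨⟨hYs1, hYs2, hYne1, hYne2⟩, fun j => ⟨hX1_1 j, hX2_1 j⟩, hmassEq,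
    hcond4, hcond5, hcond6⟩

end Proofs





/-- Lemma E.4 of Cont–Degond–Xuan: pre-image of the order-matching
clearing operator in the centred framework: for `X ∈ L⁰`,
`{Y ∈ E^m : C'(Y) = X} = Γ^m(X)`. -/
theorem preimage_clearC_eq_GammaM (d' : ℕ) (hd' : 1 ≤ d') :
    ∀ X ∈ L0 d',
      {Y : EC | Y ∈ Em d' ∧ clearC d' Y = X} = GammaM d' X := by
  intro X hX
  ext Y
  simp only [Set.mem_setOf_eq]
  constructor
  · rintro ⟨hYEm, hC⟩
    exact clear_preimage_sub d' X hX Y hYEm hC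
  · intro hY
    exact ⟨hY.1, GammaM_subset_pre d' X hX Y hY⟩

end COB
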